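/- arXiv:1111.3772 — 6 statements merged into one kernel-verified Lean document; each statement's English description precedes it below -/
import Mathlib

section
/- Let Γ be a group containing a normal subgroup A of finite index which is finitely generated, abelian and torsion-free. Let H ≤ L be finite subgroups of Γ. Then the centralizer C_Γ(L) has finite index in C_Γ(H) if and only if the torsion-free ranks of the abelian groups C_A(H) = A ∩ C_Γ(H) and C_A(L) = A ∩ C_Γ(L) are equal. -/
private lemma helper_index_rank {M : Type} [AddCommGroup M]
    [Module.Finite ℤ M] [Module.Free ℤ M] (N : AddSubgroup M) :
    N.index ≠ 0 ↔ Module.rank ℤ M = Module.rank ℤ N := by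
  classical
  haveI : Fintype (Module.Free.ChooseBasisIndex ℤ M) := Fintype.ofFinite _
  set N' : Submodule ℤ M := AddSubgroup.toIntSubmodule N with hN'
  have hNN' : N'.toAddSubgroup = N := rfl
  obtain ⟨n, snf⟩ := N'.smithNormalForm (Module.Free.chooseBasis ℤ M)
  have key : N.index ≠ 0 ↔ n = Fintype.card (Module.Free.ChooseBasisIndex ℤ M) := by
    rw [← hNN']; exact snf.toAddSubgroup_index_ne_zero_iff
  have h1 : Module.rank ℤ M = Fintype.card (Module.Free.ChooseBasisIndex ℤ M) :=
    rank_eq_card_basis (Module.Free.chooseBasis ℤ M)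
  have e : (↥N : Type) ≃+ ↥N' := AddEquiv.refl _
  have h2 : Module.rank ℤ N = n := by
    rw [e.toIntLinearEquiv.rank_eq]
    simpa using rank_eq_card_basis snf.bN
  rw [key, h1, h2]
  exact ⟨fun h => by rw [h], fun h => by exact_mod_cast h.symm⟩

private lemma addsubgroup_relindex_rank {A : Type} [AddCommGroup A]
    [Module.Finite ℤ A] [NoZeroSMulDivisors ℤ A]
    (S T : AddSubgroup A) (hTS : T ≤ S) :
    T.relIndex S ≠ 0 ↔ Module.rank ℤ S = Module.rank ℤ T := by
  haveI : IsNoetherian ℤ A := isNoetherian_of_isNoetherianRing_of_finite ℤ A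
  set p : Submodule ℤ A := S.toIntSubmodule with hp
  have eS : (↥S : Type) ≃+ ↥p := AddEquiv.refl _
  haveI : Module.Finite ℤ p := Module.Finite.iff_fg.mpr (IsNoetherian.noetherian p)
  haveI : Module.Finite ℤ ↥S := Module.Finite.equiv eS.toIntLinearEquiv.symm
  haveI : Module.Free ℤ ↥S := Module.Free.of_equiv eS.toIntLinearEquiv.symm
  rw [AddSubgroup.relIndex, helper_index_rank (T.addSubgroupOf S)]
  have e2 : (↥(T.addSubgroupOf S) : Type) ≃+ ↥T := AddSubgroup.addSubgroupOfEquivOfLe hTS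
  rw [e2.toIntLinearEquiv.rank_eq]


/-- Theorem 3.3 (virtually abelian case): let `Γ` contain a normal subgroup of finite
index which is finitely generated, abelian and torsion free (realized as the image of
an injective homomorphism `ι` from an additively written group `A`), and let `H ≤ L`
be finite subgroups of `Γ`.  Then `C_Γ(L)` has finite index in `C_Γ(H)` if and only if
the torsion-free ranks of `C_A(H) = A ∩ C_Γ(H)` and `C_A(L) = A ∩ C_Γ(L)` coincide. -/
theorem stmt5 (Γ : Type) [Group Γ] (A : Type) [AddCommGroup A] (hfg : AddGroup.FG A)
    (htf : ∀ (n : ℕ) (a : A), 0 < n → n • a = 0 → a = 0)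
    (ι : Multiplicative A →* Γ) (hinj : Function.Injective ι)
    (hnormal : ι.range.Normal) (hindex : ι.range.FiniteIndex)
    (H L : Subgroup Γ) (hHL : H ≤ L) (hHfin : Finite H) (hLfin : Finite L) :
    (Subgroup.centralizer (L : Set Γ)).relIndex (Subgroup.centralizer (H : Set Γ)) ≠ 0 ↔
      Module.rank ℤ
          (Subgroup.toAddSubgroup' ((Subgroup.centralizer (H : Set Γ)).comap ι)) =
        Module.rank ℤ
          (Subgroup.toAddSubgroup' ((Subgroup.centralizer (L : Set Γ)).comap ι)) := by
  haveI := hnormal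
  -- instances on A
  haveI : Module.Finite ℤ A := Module.Finite.iff_addGroup_fg.mpr hfg
  haveI : NoZeroSMulDivisors ℤ A := by
    refine ⟨fun {c} {x} h => ?_⟩
    rcases eq_or_ne c 0 with hc | hc
    · exact Or.inl hc
    · refine Or.inr (htf c.natAbs x (Int.natAbs_pos.mpr hc) ?_)
      have : ((c.natAbs : ℤ)) • x = 0 := by
        rcases Int.natAbs_eq c with h' | h'
        · rw [← h']; exact h
        · have hc' : ((c.natAbs : ℤ)) = -c := by omega
          rw [hc', neg_smul, h, neg_zero]
      rw [← natCast_zsmul]; exact this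
  set R := ι.range with hR
  set CH := Subgroup.centralizer (H : Set Γ) with hCH
  set CL := Subgroup.centralizer (L : Set Γ) with hCL
  have hCLH : CL ≤ CH := Subgroup.centralizer_le (by exact_mod_cast hHL)
  have hRCH : R.relIndex CH ≠ 0 := fun h0 =>
    hindex.index_ne_zero (Nat.eq_zero_of_zero_dvd (h0 ▸ Subgroup.relIndex_dvd_index_of_normal R CH))
  have hRCL : R.relIndex CL ≠ 0 := fun h0 =>
    hindex.index_ne_zero (Nat.eq_zero_of_zero_dvd (h0 ▸ Subgroup.relIndex_dvd_index_of_normal R CL))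
  -- step 1
  have e1 : (CL ⊓ R).relIndex CL * CL.relIndex CH = (CL ⊓ R).relIndex CH :=
    Subgroup.relIndex_mul_relIndex _ _ _ inf_le_left hCLH
  have e2 : (CL ⊓ R).relIndex (CH ⊓ R) * (CH ⊓ R).relIndex CH = (CL ⊓ R).relIndex CH :=
    Subgroup.relIndex_mul_relIndex _ _ _ (inf_le_inf_right R hCLH) inf_le_left
  have f1 : (CL ⊓ R).relIndex CL = R.relIndex CL := Subgroup.inf_relIndex_left CL R
  have f2 : (CH ⊓ R).relIndex CH = R.relIndex CH := Subgroup.inf_relIndex_left CH R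
  have step1 : CL.relIndex CH ≠ 0 ↔ (CL ⊓ R).relIndex (CH ⊓ R) ≠ 0 := by
    rw [f1] at e1; rw [f2] at e2
    constructor
    · intro h h0
      rw [h0, zero_mul] at e2
      exact mul_ne_zero hRCL h (e1.trans e2.symm)
    · intro h h0
      rw [h0, mul_zero] at e1
      exact mul_ne_zero h hRCH (e2.trans e1.symm)
  -- step 2 : transfer to Multiplicative A
  have step2 : (CL ⊓ R).relIndex (CH ⊓ R) = (CL.comap ι).relIndex (CH.comap ι) := by
    rw [Subgroup.relIndex_comap, Subgroup.map_comap_eq]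
    have hinf : CL ⊓ (R ⊓ CH) = CL ⊓ R := by
      rw [inf_comm R CH, ← inf_assoc, inf_of_le_left hCLH]
    rw [← Subgroup.inf_relIndex_right (H := CL) (K := R ⊓ CH), hinf, inf_comm R CH]
  -- step 3 : additive
  set S := Subgroup.toAddSubgroup' (CH.comap ι) with hS
  set T := Subgroup.toAddSubgroup' (CL.comap ι) with hT
  have step3 : (CL.comap ι).relIndex (CH.comap ι) = T.relIndex S := rfl
  have hTS : T ≤ S := by
    have : CL.comap ι ≤ CH.comap ι := Subgroup.comap_mono hCLH
    exact this
  rw [step1, step2, step3]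
  exact addsubgroup_relindex_rank S T hTS
end

section
/- Let Γ be a group with a torsion-free normal subgroup G. Let H be a finite subgroup of Γ, let L be a subgroup of H, and let g ∈ G be such that the conjugate g⁻¹Lg is contained in H. Then g⁻¹Lg = L. -/
/-- The definition of `Monoid.IsTorsionFree` from the older Mathlib (removed since). -/
def Monoid.IsTorsionFree (G : Type*) [Monoid G] : Prop :=
  ∀ g : G, g ≠ 1 → ¬IsOfFinOrder g

/-- Lemma 3.4 (first assertion): if `G` is a torsion-free normal subgroup of `Γ`,
`H` a finite subgroup, `L ≤ H`, and `g ∈ G` is such that `g⁻¹ L g ≤ H`,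
then `g⁻¹ L g = L`. -/
theorem stmt6 (Γ : Type) [Group Γ] (G : Subgroup Γ) (hnormal : G.Normal)
    (htf : Monoid.IsTorsionFree G)
    (H : Subgroup Γ) (hHfin : Finite H) (L : Subgroup Γ) (hLH : L ≤ H)
    (g : Γ) (hg : g ∈ G)
    (hconj : L.map (MulAut.conj g⁻¹).toMonoidHom ≤ H) :
    L.map (MulAut.conj g⁻¹).toMonoidHom = L := by
  have key : ∀ x ∈ L, g⁻¹ * x * g = x := by
    intro x hx
    have hyH : g⁻¹ * x * g ∈ H := by
      have := hconj ⟨x, hx, rfl⟩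
      simpa [MulAut.conj] using this
    have hzG : (g⁻¹ * x * g) * x⁻¹ ∈ G := by
      have h1 : x * g * x⁻¹ ∈ G := hnormal.conj_mem g hg x
      have h2 : g⁻¹ * (x * g * x⁻¹) ∈ G := mul_mem (inv_mem hg) h1
      simpa [mul_assoc] using h2
    have hzH : (g⁻¹ * x * g) * x⁻¹ ∈ H := mul_mem hyH (inv_mem (hLH hx))
    have hfin : IsOfFinOrder ((⟨_, hzG⟩ : G)) := by
      have : IsOfFinOrder ((⟨_, hzH⟩ : H)) := isOfFinOrder_of_finite _
      have hc : IsOfFinOrder ((g⁻¹ * x * g) * x⁻¹) := Submonoid.isOfFinOrder_coe.2 this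
      exact Submonoid.isOfFinOrder_coe.1 hc
    have hz1 : ((⟨_, hzG⟩ : G)) = 1 := by
      by_contra hne
      exact htf _ hne hfin
    have : (g⁻¹ * x * g) * x⁻¹ = 1 := congrArg Subtype.val hz1
    calc g⁻¹ * x * g = ((g⁻¹ * x * g) * x⁻¹) * x := by group
    _ = x := by rw [this, one_mul]
  ext y
  simp only [Subgroup.mem_map, MulEquiv.coe_toMonoidHom, MulAut.conj_apply, inv_inv]
  constructor
  · rintro ⟨x, hx, rfl⟩
    rw [key x hx]; exact hx
  · intro hy
    exact ⟨y, hy, key y hy⟩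
end

section
/- Let Γ be a group with a torsion-free normal subgroup G of finite index. Let H be a finite subgroup of Γ which is maximal among the finite subgroups of Γ, and suppose the centralizer C_G(H) is trivial. Then the normalizer of H in Γ equals H, i.e. N_Γ(H) = H. -/
/-- Lemma 4.6(i), group-theoretic part: if `G` is a torsion-free normal subgroup of
finite index in `Γ`, and `H` is a maximal finite subgroup of `Γ` with trivial
centralizer in `G`, then `N_Γ(H) = H`. -/
theorem stmt9 (Γ : Type) [Group Γ] (G : Subgroup Γ) (hnormal : G.Normal)
    (hindex : G.FiniteIndex) (htf : ∀ g : G, g ≠ 1 → ¬IsOfFinOrder g)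
    (H : Subgroup Γ) (hHfin : Finite H)
    (hmax : ∀ K : Subgroup Γ, Finite K → H ≤ K → K = H)
    (hcent : Subgroup.centralizer (H : Set Γ) ⊓ G = ⊥) :
    Subgroup.normalizer (H : Set Γ) = H := by
  -- Step 1: N(H) ⊓ G = ⊥
  have hNG : Subgroup.normalizer (H : Set Γ) ⊓ G = ⊥ := by
    rw [Subgroup.eq_bot_iff_forall]
    rintro g ⟨hgN, hgG⟩
    set x : Subgroup.normalizer (H : Set Γ) := ⟨g, hgN⟩ with hx
    have hfinAut : Finite (MulAut H) := inferInstance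
    set n := orderOf (H.normalizerMonoidHom x) with hn
    have hnpos : 0 < n := by
      have : IsOfFinOrder (H.normalizerMonoidHom x) := isOfFinOrder_of_finite _
      exact this.orderOf_pos
    have hker : x ^ n ∈ H.normalizerMonoidHom.ker := by
      rw [MonoidHom.mem_ker, map_pow, pow_orderOf_eq_one]
    rw [Subgroup.normalizerMonoidHom_ker, Subgroup.mem_subgroupOf] at hker
    have hgn : g ^ n ∈ Subgroup.centralizer (H : Set Γ) ⊓ G :=
      ⟨hker, G.pow_mem hgG n⟩
    rw [hcent, Subgroup.mem_bot] at hgn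
    -- g has finite order, but g ∈ G torsion-free, so g = 1
    by_contra hne
    have : IsOfFinOrder (⟨g, hgG⟩ : G) := by
      refine isOfFinOrder_iff_pow_eq_one.mpr ⟨n, hnpos, ?_⟩
      ext
      simpa using hgn
    exact htf ⟨g, hgG⟩ (by simpa [Subtype.ext_iff] using hne) this
  -- Step 2: N(H) is finite
  have hfinQ : Finite (Γ ⧸ G) := G.finite_quotient_of_finiteIndex
  have hinj : Function.Injective
      ((QuotientGroup.mk' G).comp (Subgroup.normalizer (H : Set Γ)).subtype) := by
    rw [← MonoidHom.ker_eq_bot_iff]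
    rw [Subgroup.eq_bot_iff_forall]
    intro x hxk
    rw [MonoidHom.mem_ker, MonoidHom.comp_apply, QuotientGroup.mk'_apply,
      QuotientGroup.eq_one_iff] at hxk
    have : (x : Γ) ∈ Subgroup.normalizer (H : Set Γ) ⊓ G := ⟨x.2, hxk⟩
    rw [hNG, Subgroup.mem_bot] at this
    exact Subtype.ext this
  have hNfin : Finite (Subgroup.normalizer (H : Set Γ)) := Finite.of_injective _ hinj
  exact hmax (Subgroup.normalizer (H : Set Γ)) hNfin Subgroup.le_normalizer
end

section
/- Let Γ be a group containing a normal subgroup A of finite index which is torsion-free and abelian. Let S be a finite subgroup of Γ whose centralizer in A is trivial, i.e. C_A(S) = 1. Then there exists exactly one subgroup F of Γ such that F is finite, S ≤ F, and F is maximal among the finite subgroups of Γ. -/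
lemma aux1 {Γ α : Type} [Group Γ] [CommGroup α] (φ : Γ →* MulAut α) (c : Γ → α)
    (hc1 : ∀ γ δ : Γ, c (γ * δ) = φ γ (c δ) * c γ)
    (K : Subgroup Γ) [Fintype ↥K] {g : Γ} (hg : g ∈ K) :
    φ g (∏ k : ↥K, c ↑k) * c g ^ Fintype.card ↥K = ∏ k : ↥K, c ↑k := by
  have h1 : φ g (∏ k : ↥K, c ↑k) = ∏ k : ↥K, (c (g * ↑k) * (c g)⁻¹) := by
    rw [map_prod]
    refine Finset.prod_congr rfl fun k _ => ?_
    rw [hc1]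
    group
  have h2 : ∏ k : ↥K, c (g * ↑k) = ∏ k : ↥K, c ↑k := by
    have := Equiv.prod_comp (Equiv.mulLeft (⟨g, hg⟩ : ↥K)) (fun k : ↥K => c ↑k)
    simpa using this
  rw [h1, Finset.prod_mul_distrib, Finset.prod_const, h2, Finset.card_univ]
  group

lemma memA {Γ : Type} [Group Γ] (A : Subgroup Γ) [A.Normal] (γ : Γ) (q : Γ ⧸ A) :
    γ * q.out * ((γ • q).out)⁻¹ ∈ A := by
  have h1 : γ • q = (QuotientGroup.mk (γ * q.out) : Γ ⧸ A) := by
    nth_rewrite 1 [← QuotientGroup.out_eq' q]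
    rw [← smul_eq_mul]
    exact (MulAction.Quotient.smul_mk A γ q.out).symm
  rw [← QuotientGroup.eq_one_iff, h1]
  rw [QuotientGroup.mk_mul, QuotientGroup.mk_inv, QuotientGroup.out_eq', mul_inv_cancel]

lemma smul_fix {Γ : Type} [Group Γ] (A : Subgroup Γ) [A.Normal] (x : Γ) (hx : x ∈ A)
    (q : Γ ⧸ A) : x • q = q := by
  nth_rewrite 1 [← QuotientGroup.out_eq' q]
  rw [MulAction.Quotient.smul_mk, smul_eq_mul]
  have h : (QuotientGroup.mk (x * q.out) : Γ ⧸ A) = QuotientGroup.mk q.out := by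
    rw [QuotientGroup.eq]
    have h2 : (x * q.out)⁻¹ * q.out = q.out⁻¹ * x⁻¹ * q.out := by group
    rw [h2]
    simpa [mul_assoc] using Subgroup.Normal.conj_mem ‹A.Normal› _ (A.inv_mem hx) q.out⁻¹
  rw [h, QuotientGroup.out_eq']

/-- Lemma 4.8 (virtually abelian case): let `Γ` contain a torsion-free abelian normal
subgroup `A` of finite index, and let `S` be a finite subgroup with `C_A(S) = 1`.
Then there is exactly one maximal finite subgroup of `Γ` containing `S`. -/
theorem stmt10 (Γ : Type) [Group Γ] (A : Subgroup Γ) (hnormal : A.Normal)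
    (hindex : A.FiniteIndex)
    (hab : ∀ a b : Γ, a ∈ A → b ∈ A → a * b = b * a)
    (htf : ∀ g : A, g ≠ 1 → ¬IsOfFinOrder g)
    (S : Subgroup Γ) (hSfin : Finite S)
    (hcent : Subgroup.centralizer (S : Set Γ) ⊓ A = ⊥) :
    ∃! F : Subgroup Γ,
      Finite F ∧ S ≤ F ∧ ∀ K : Subgroup Γ, Finite K → F ≤ K → K = F := by
  classical
  haveI := hnormal
  haveI := hindex
  letI : CommGroup ↥A :=
    { (inferInstance : Group ↥A) with
      mul_comm := fun a b => Subtype.ext (hab ↑a ↑b a.2 b.2) }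
  haveI : Finite (Γ ⧸ A) := A.finite_quotient_of_finiteIndex
  haveI : Fintype (Γ ⧸ A) := Fintype.ofFinite _
  haveI : Fintype ↥S := Fintype.ofFinite _
  have tf : ∀ (x : ↥A) (n : ℕ), n ≠ 0 → x ^ n = 1 → x = 1 := by
    intro x n hn hx
    by_contra h
    exact htf x h (isOfFinOrder_iff_pow_eq_one.mpr ⟨n, Nat.pos_of_ne_zero hn, hx⟩)
  set φ : Γ →* MulAut ↥A := MulAut.conjNormal with hφ
  have hφapp : ∀ (γ : Γ) (x : ↥A), (↑(φ γ x) : Γ) = γ * ↑x * γ⁻¹ := by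
    intro γ x; simp [hφ, MulAut.conjNormal_apply]
  have hφA : ∀ (a : Γ), a ∈ A → ∀ x : ↥A, φ a x = x := by
    intro a ha x
    refine Subtype.ext ?_
    rw [hφapp]
    have h := hab a ↑x ha x.2
    rw [h]; group
  have star : ∀ x : ↥A, (∏ s : ↥S, φ ↑s x) = 1 := by
    intro x
    set y : ↥A := ∏ s : ↥S, φ ↑s x with hy
    have hcomm : ∀ s₀ ∈ S, s₀ * (y : Γ) = ↑y * s₀ := by
      intro s₀ hs₀
      have h1 : φ s₀ y = y := by
        rw [hy, map_prod]
        have h2 := Equiv.prod_comp (Equiv.mulLeft (⟨s₀, hs₀⟩ : ↥S)) (fun s : ↥S => φ ↑s x)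
        calc ∏ s : ↥S, φ s₀ (φ ↑s x) = ∏ s : ↥S, φ ↑((⟨s₀, hs₀⟩ : ↥S) * s) x := by
              refine Finset.prod_congr rfl fun s _ => ?_
              rw [Subgroup.coe_mul, map_mul]
              rfl
          _ = ∏ s : ↥S, φ ↑s x := h2
      have h3 := congrArg (fun z : ↥A => (z : Γ)) h1
      simp only [hφapp] at h3
      calc s₀ * (y : Γ) = (s₀ * ↑y * s₀⁻¹) * s₀ := by group
        _ = ↑y * s₀ := by rw [h3]
    have hyc : (y : Γ) ∈ Subgroup.centralizer (S : Set Γ) ⊓ A :=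
      ⟨Subgroup.mem_centralizer_iff.mpr hcomm, y.2⟩
    rw [hcent, Subgroup.mem_bot] at hyc
    exact Subtype.ext hyc
  have fixS : ∀ x : ↥A, (∀ s ∈ S, φ s x = x) → x = 1 := by
    intro x hx
    have h1 : x ^ Fintype.card ↥S = 1 := by
      rw [← star x, ← Finset.card_univ, ← Finset.prod_const]
      exact Finset.prod_congr rfl fun s _ => (hx ↑s s.2).symm
    exact tf x _ Fintype.card_ne_zero h1
  set c : Γ → ↥A := fun γ => ∏ q : Γ ⧸ A, (⟨γ * q.out * ((γ • q).out)⁻¹, memA A γ q⟩ : ↥A)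
    with hc
  have hc1 : ∀ γ δ : Γ, c (γ * δ) = φ γ (c δ) * c γ := by
    intro γ δ
    have hre : (∏ q : Γ ⧸ A, (⟨γ * (δ • q).out * ((γ • δ • q).out)⁻¹, memA A γ (δ • q)⟩ : ↥A))
        = c γ := by
      rw [hc]
      exact Equiv.prod_comp (MulAction.toPerm δ)
        (fun q : Γ ⧸ A => (⟨γ * q.out * ((γ • q).out)⁻¹, memA A γ q⟩ : ↥A))
    calc c (γ * δ)
        = ∏ q : Γ ⧸ A, (φ γ (⟨δ * q.out * ((δ • q).out)⁻¹, memA A δ q⟩ : ↥A) *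
            (⟨γ * (δ • q).out * ((γ • δ • q).out)⁻¹, memA A γ (δ • q)⟩ : ↥A)) := by
          rw [hc]
          refine Finset.prod_congr rfl fun q _ => ?_
          refine Subtype.ext ?_
          rw [Subgroup.coe_mul, hφapp]
          show γ * δ * q.out * (((γ * δ) • q).out)⁻¹
              = γ * (δ * q.out * ((δ • q).out)⁻¹) * γ⁻¹ *
                (γ * (δ • q).out * ((γ • δ • q).out)⁻¹)
          rw [mul_smul]
          group
      _ = φ γ (c δ) * c γ := by
          rw [Finset.prod_mul_distrib, hre, hc, ← map_prod]
  have hc2 : ∀ (x : Γ) (hx : x ∈ A), c x = (⟨x, hx⟩ : ↥A) ^ Fintype.card (Γ ⧸ A) := by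
    intro x hx
    rw [hc]
    have h1 : ∀ q : Γ ⧸ A, (⟨x * q.out * ((x • q).out)⁻¹, memA A x q⟩ : ↥A) = ⟨x, hx⟩ := by
      intro q
      refine Subtype.ext ?_
      show x * q.out * ((x • q).out)⁻¹ = x
      rw [smul_fix A x hx q]
      group
    simp only [h1]
    rw [Finset.prod_const, Finset.card_univ]
  have hcone : c 1 = 1 := by
    have h := hc1 1 1
    rw [mul_one, map_one] at h
    have h2 : c 1 * 1 = c 1 * c 1 := by simpa using h
    exact (mul_left_cancel h2).symm
  have hcinv : ∀ γ : Γ, φ γ (c γ⁻¹) = (c γ)⁻¹ := by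
    intro γ
    have h := hc1 γ γ⁻¹
    rw [mul_inv_cancel, hcone] at h
    exact eq_inv_of_mul_eq_one_left h.symm
  set N : ℕ := Fintype.card ↥S with hN
  set w : ↥A := ∏ s : ↥S, c ↑s with hw
  set F : Subgroup Γ :=
    { carrier := {γ : Γ | φ γ w * c γ ^ N = w}
      one_mem' := by simp [hcone]
      mul_mem' := by
        intro γ δ hγ hδ
        simp only [Set.mem_setOf_eq] at hγ hδ ⊢
        have h1 : φ (γ * δ) w * c (γ * δ) ^ N = φ γ (φ δ w * c δ ^ N) * c γ ^ N := by
          rw [hc1, map_mul φ]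
          simp only [MulAut.mul_apply, map_mul, map_pow, mul_pow, mul_assoc]
        rw [h1, hδ, hγ]
      inv_mem' := by
        intro γ hγ
        simp only [Set.mem_setOf_eq] at hγ ⊢
        have hinj : Function.Injective (φ γ) := (φ γ).injective
        apply hinj
        rw [map_mul, map_pow, hcinv]
        have h2 : φ γ (φ γ⁻¹ w) = w := by
          rw [← MulAut.mul_apply, ← map_mul φ, mul_inv_cancel, map_one, MulAut.one_apply]
        rw [h2]
        calc w * ((c γ)⁻¹) ^ N = (φ γ w * c γ ^ N) * ((c γ)⁻¹) ^ N := by rw [hγ]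
          _ = φ γ w := by group } with hF
  have hmemF : ∀ γ : Γ, γ ∈ F ↔ φ γ w * c γ ^ N = w := fun γ => Iff.rfl
  have step12 : ∀ K : Subgroup Γ, Finite ↥K → S ≤ K → K ≤ F := by
    intro K hKfin hSK
    letI : Fintype ↥K := Fintype.ofFinite _
    set n : ℕ := Fintype.card ↥K with hn
    set wK : ↥A := ∏ k : ↥K, c ↑k with hwK
    have hK : ∀ g : Γ, g ∈ K → φ g wK * c g ^ n = wK := fun g hg => aux1 φ c hc1 K hg
    have hS : ∀ g : Γ, g ∈ S → φ g w * c g ^ N = w := fun g hg => aux1 φ c hc1 S hg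
    have hmain : wK ^ N = w ^ n := by
      have hx : ∀ s ∈ S, φ s (wK ^ N * (w ^ n)⁻¹) = wK ^ N * (w ^ n)⁻¹ := by
        intro s hs
        have e1 : φ s wK = wK * (c s ^ n)⁻¹ := eq_mul_inv_of_mul_eq (hK s (hSK hs))
        have e2 : φ s w = w * (c s ^ N)⁻¹ := eq_mul_inv_of_mul_eq (hS s hs)
        rw [map_mul, map_inv, map_pow, map_pow, e1, e2]
        simp only [mul_pow, inv_pow, ← pow_mul]
        rw [Nat.mul_comm n N]
        group
      have h0 := fixS _ hx
      have h3 : wK ^ N * (w ^ n)⁻¹ * w ^ n = 1 * w ^ n := by rw [h0]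
      simpa using h3
    intro g hg
    rw [hmemF g]
    have hgK := hK g hg
    have hEn : (φ g w * c g ^ N * w⁻¹) ^ n = (φ g wK * c g ^ n * wK⁻¹) ^ N := by
      simp only [mul_pow, inv_pow, ← map_pow, ← pow_mul]
      rw [← hmain, Nat.mul_comm N n]
    have hE : (φ g w * c g ^ N * w⁻¹) ^ n = 1 := by
      rw [hEn, hgK]
      simp
    have hE1 := tf _ n Fintype.card_ne_zero hE
    have h5 : φ g w * c g ^ N * w⁻¹ * w = 1 * w := by rw [hE1]
    simpa using h5
  have hFA : ∀ a : Γ, a ∈ A → a ∈ F → a = 1 := by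
    intro a ha haF
    rw [hmemF a] at haF
    rw [hφA a ha w] at haF
    have h2 : c a ^ N = 1 :=
      mul_left_cancel (show w * c a ^ N = w * 1 by rw [mul_one]; exact haF)
    have h3 : c a = 1 := tf _ N Fintype.card_ne_zero h2
    rw [hc2 a ha] at h3
    have h4 : (⟨a, ha⟩ : ↥A) = 1 := tf _ _ Fintype.card_ne_zero h3
    exact congrArg Subtype.val h4
  have hFfin : Finite ↥F := by
    have hinj : Function.Injective (fun x : ↥F => (QuotientGroup.mk (x : Γ) : Γ ⧸ A)) := by
      intro x y hxy
      have hxy' : ((x : Γ))⁻¹ * (y : Γ) ∈ A := QuotientGroup.eq.mp hxy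
      have hmem2 : ((x : Γ))⁻¹ * (y : Γ) ∈ F := F.mul_mem (F.inv_mem x.2) y.2
      have h0 := hFA _ hxy' hmem2
      apply Subtype.ext
      have h6 : (x : Γ) * (((x : Γ))⁻¹ * (y : Γ)) = (x : Γ) * 1 := by rw [h0]
      have h7 : (y : Γ) = (x : Γ) := by simpa using h6
      exact h7.symm
    exact Finite.of_injective _ hinj
  have hSF : S ≤ F := step12 S hSfin le_rfl
  refine ⟨F, ⟨hFfin, hSF, ?_⟩, ?_⟩
  · intro K hKfin hFK
    exact le_antisymm (step12 K hKfin (le_trans hSF hFK)) hFK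
  · rintro F' ⟨hF'fin, hSF', hmax'⟩
    have hle : F' ≤ F := step12 F' hF'fin hSF'
    exact (hmax' F hFfin hle).symm
end

section
/- Let H be a finite group acting on an abelian group A by automorphisms, and suppose A has Prüfer rank at most r for some natural number r. Then the first group cohomology group H¹(H, A) is finite. -/
/-- `M` has Prüfer rank at most `R`. -/
def HasRankLE (M : Type*) [AddCommGroup M] (R : ℕ) : Prop :=
  ∀ S : AddSubgroup M, S.FG →
    ∃ s : Finset M, s.card ≤ R ∧ AddSubgroup.closure (s : Set M) = S

section RankLemmas

variable {M N : Type*} [AddCommGroup M] [AddCommGroup N] {R a b : ℕ}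

lemma AddSubgroupFGmap {S : AddSubgroup M} (h : S.FG) (f : M →+ N) :
    (S.map f).FG := by
  classical
  obtain ⟨s, hs⟩ := h
  exact ⟨s.image f, by rw [Finset.coe_image, ← AddMonoidHom.map_closure, hs]⟩

lemma hasRankLE_of_injective (f : M →+ N) (hf : Function.Injective f)
    (h : HasRankLE N R) : HasRankLE M R := by
  classical
  intro S hS
  obtain ⟨t, htc, htS⟩ := h (S.map f) (AddSubgroupFGmap hS f)
  have hsub : ∀ x ∈ t, ∃ y, y ∈ S ∧ f y = x := by
    intro x hx
    have : x ∈ S.map f := htS ▸ AddSubgroup.subset_closure hx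
    obtain ⟨y, hy, hxy⟩ := this
    exact ⟨y, hy, hxy⟩
  choose! y hyS hyf using hsub
  refine ⟨t.image y, le_trans Finset.card_image_le htc, ?_⟩
  apply AddSubgroup.map_injective hf
  have himg : f '' (y '' (t : Set N)) = (t : Set N) := by
    rw [Set.image_image]
    ext z
    constructor
    · rintro ⟨x, hx, rfl⟩
      show f (y x) ∈ (t : Set N)
      rw [hyf x hx]; exact hx
    · intro hz
      exact ⟨z, hz, hyf z hz⟩
  rw [AddMonoidHom.map_closure, Finset.coe_image, himg, htS]

lemma hasRankLE_of_surjective (f : M →+ N) (hf : Function.Surjective f)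
    (h : HasRankLE M R) : HasRankLE N R := by
  classical
  intro T hT
  obtain ⟨t, ht⟩ := hT
  choose g hg using hf
  obtain ⟨s, hsc, hsS⟩ := h (AddSubgroup.closure ((t.image g : Finset M) : Set M))
    ⟨t.image g, rfl⟩
  refine ⟨s.image f, le_trans Finset.card_image_le hsc, ?_⟩
  have himg : f '' (g '' (t : Set N)) = (t : Set N) := by
    rw [Set.image_image]
    ext z
    simp [hg]
  rw [Finset.coe_image, ← AddMonoidHom.map_closure, hsS, AddMonoidHom.map_closure,
    Finset.coe_image, himg]
  exact ht

/-- A subgroup of a finitely generated subgroup (of an abelian group) is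
finitely generated. -/
lemma fg_of_le_fg {S K : AddSubgroup M} (hS : S.FG) (hKS : K ≤ S) : K.FG := by
  set S' := AddSubgroup.toIntSubmodule S with hS'
  set K' := AddSubgroup.toIntSubmodule K with hK'
  have hSfg : S'.FG := by
    rw [Submodule.fg_iff_addSubgroup_fg, hS', AddSubgroup.toIntSubmodule_toAddSubgroup]
    exact hS
  have hKS' : K' ≤ S' := hKS
  haveI : Module.Finite ℤ S' := Module.Finite.iff_fg.2 hSfg
  haveI : IsNoetherian ℤ S' := inferInstance
  have hfg : (K'.comap S'.subtype).FG := IsNoetherian.noetherian _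
  have hmap : (K'.comap S'.subtype).map S'.subtype = K' := by
    rw [Submodule.map_comap_eq, Submodule.range_subtype]
    exact inf_eq_right.2 hKS'
  have : K'.FG := hmap ▸ hfg.map _
  rw [Submodule.fg_iff_addSubgroup_fg, hK', AddSubgroup.toIntSubmodule_toAddSubgroup] at this
  exact this

lemma hasRankLE_prod (hM : HasRankLE M a) (hN : HasRankLE N b) :
    HasRankLE (M × N) (a + b) := by
  classical
  intro S hS
  set fst := AddMonoidHom.fst M N
  set snd := AddMonoidHom.snd M N
  set inr := AddMonoidHom.inr M N
  obtain ⟨s₁, hs₁c, hs₁⟩ := hM (S.map fst) (AddSubgroupFGmap hS fst)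
  set K : AddSubgroup (M × N) := S ⊓ fst.ker with hK
  have hKfg : K.FG := fg_of_le_fg hS inf_le_left
  obtain ⟨t, htc, ht⟩ := hN (K.map snd) (AddSubgroupFGmap hKfg snd)
  -- lift generators of s₁
  have hs₁sub : ∀ x ∈ s₁, ∃ p, p ∈ S ∧ fst p = x := by
    intro x hx
    have : x ∈ S.map fst := hs₁ ▸ AddSubgroup.subset_closure hx
    obtain ⟨p, hp, hpx⟩ := this
    exact ⟨p, hp, hpx⟩
  choose! p hpS hpf using hs₁sub
  refine ⟨s₁.image p ∪ t.image inr,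
    le_trans (Finset.card_union_le _ _)
      (add_le_add (le_trans Finset.card_image_le hs₁c)
        (le_trans Finset.card_image_le htc)), ?_⟩
  set C := AddSubgroup.closure ((s₁.image p ∪ t.image inr : Finset (M × N)) : Set (M × N))
    with hC
  have hinrK : ∀ x ∈ t, inr x ∈ K := by
    intro x hx
    have : x ∈ K.map snd := ht ▸ AddSubgroup.subset_closure hx
    obtain ⟨q, hq, hqx⟩ := this
    have hq0 : fst q = 0 := (AddSubgroup.mem_inf.1 hq).2
    have : q = inr x := by
      ext
      · exact hq0
      · exact hqx
    exact this ▸ hq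
  have hCS : C ≤ S := by
    rw [hC]
    apply AddSubgroup.closure_le _ |>.2
    intro z hz
    simp only [Finset.coe_union, Set.mem_union, Finset.coe_image, Set.mem_image] at hz
    rcases hz with ⟨x, hx, rfl⟩ | ⟨x, hx, rfl⟩
    · exact hpS x hx
    · exact (AddSubgroup.mem_inf.1 (hinrK x hx)).1
  refine le_antisymm hCS ?_
  intro z hz
  -- find c ∈ C with fst c = fst z
  have hfstz : fst z ∈ C.map fst := by
    have h1 : AddSubgroup.closure (s₁ : Set M) ≤ C.map fst := by
      apply AddSubgroup.closure_le _ |>.2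
      intro x hx
      refine ⟨p x, AddSubgroup.subset_closure ?_, hpf x hx⟩
      simp only [Finset.coe_union, Set.mem_union, Finset.coe_image, Set.mem_image]
      exact Or.inl ⟨x, hx, rfl⟩
    exact h1 (hs₁ ▸ AddSubgroup.mem_map_of_mem fst hz)
  obtain ⟨c, hcC, hcfst⟩ := hfstz
  have hzcK : z - c ∈ K := by
    refine AddSubgroup.mem_inf.2 ⟨sub_mem hz (hCS hcC), ?_⟩
    simp only [AddMonoidHom.mem_ker, map_sub, hcfst, sub_self]
  have hsndC : inr (snd (z - c)) ∈ C := by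
    have h2 : AddSubgroup.closure (t : Set N) ≤ C.comap inr := by
      apply AddSubgroup.closure_le _ |>.2
      intro x hx
      refine AddSubgroup.subset_closure ?_
      simp only [Finset.coe_union, Set.mem_union, Finset.coe_image, Set.mem_image]
      exact Or.inr ⟨x, hx, rfl⟩
    exact h2 (ht ▸ AddSubgroup.mem_map_of_mem snd hzcK)
  have heq : z - c = inr (snd (z - c)) := by
    have h0 : fst (z - c) = 0 := (AddSubgroup.mem_inf.1 hzcK).2
    ext
    · exact h0
    · rfl
  have : z - c ∈ C := heq ▸ hsndC
  simpa using add_mem this hcC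

lemma hasRankLE_pi (hM : HasRankLE M R) (m : ℕ) :
    HasRankLE (Fin m → M) (m * R) := by
  induction m with
  | zero =>
    intro S _
    refine ⟨∅, by simp, ?_⟩
    have : Subsingleton (Fin 0 → M) := ⟨fun a b => funext fun i => i.elim0⟩
    exact Subsingleton.elim _ _
  | succ m ih =>
    have hprod : HasRankLE (M × (Fin m → M)) (R + m * R) := hasRankLE_prod hM ih
    have hhom : HasRankLE (Fin (m + 1) → M) (R + m * R) := by
      refine hasRankLE_of_injective
        { toFun := fun f => (f 0, f ∘ Fin.succ)
          map_zero' := rfl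
          map_add' := fun _ _ => rfl } ?_ hprod
      intro f g hfg
      funext i
      refine Fin.cases ?_ ?_ i
      · exact congrArg Prod.fst hfg
      · intro j
        exact congrFun (congrArg Prod.snd hfg) j
    have : R + m * R = (m + 1) * R := by ring
    exact this ▸ hhom

lemma hasRankLE_fun {H : Type*} [Fintype H] (hM : HasRankLE M R) :
    HasRankLE (H → M) (Fintype.card H * R) := by
  set e := (Fintype.equivFin H).symm
  refine hasRankLE_of_injective
    { toFun := fun f => f ∘ e
      map_zero' := rfl
      map_add' := fun _ _ => rfl } ?_ (hasRankLE_pi hM (Fintype.card H))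
  intro f g hfg
  funext x
  have := congrFun hfg (e.symm x)
  simpa using this

/-- In a group where every element is `n`-torsion, the closure of a finset of
cardinality `k` has at most `n ^ k` elements. -/
lemma closure_card_le {G : Type*} [AddCommGroup G] (n : ℕ) (hn : 0 < n)
    (htor : ∀ x : G, n • x = 0) (s : Finset G) :
    Nat.card (AddSubgroup.closure (s : Set G)) ≤ n ^ s.card ∧
      Finite (AddSubgroup.closure (s : Set G)) := by
  classical
  have hmod : ∀ (k : ℕ) (x : G), (k % n) • x = k • x := by
    intro k x
    conv_rhs => rw [← Nat.mod_add_div k n, add_smul, mul_comm, mul_smul, htor,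
      smul_zero, add_zero]
  set ψ : (s → Fin n) → G := fun c => ∑ x : s, (c x : ℕ) • (x : G) with hψ
  have hmem : ∀ z ∈ AddSubgroup.closure (s : Set G), ∃ c, ψ c = z := by
    intro z hz
    induction hz using AddSubgroup.closure_induction with
    | mem x hx =>
      refine ⟨fun y => if (y : G) = x then ⟨1 % n, Nat.mod_lt _ hn⟩ else ⟨0, hn⟩, ?_⟩
      simp only [hψ]
      have hxs : (⟨x, hx⟩ : s) ∈ Finset.univ := Finset.mem_univ _
      rw [Finset.sum_eq_single (⟨x, hx⟩ : s)]
      · simp [hmod 1 x]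
      · intro b _ hb
        have hbx : (b : G) ≠ x := fun hbx => hb (Subtype.ext hbx)
        simp [hbx]
      · intro h
        exact absurd hxs h
    | zero =>
      exact ⟨fun _ => ⟨0, hn⟩, by simp [hψ]⟩
    | add x y _ _ hx hy =>
      obtain ⟨c, hc⟩ := hx
      obtain ⟨d, hd⟩ := hy
      refine ⟨fun z => ⟨((c z : ℕ) + (d z : ℕ)) % n, Nat.mod_lt _ hn⟩, ?_⟩
      simp only [hψ]
      rw [← hc, ← hd]
      simp only [hψ]
      rw [← Finset.sum_add_distrib]
      congr 1
      funext z
      rw [hmod, add_smul]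
    | neg x _ hx =>
      obtain ⟨c, hc⟩ := hx
      refine ⟨fun z => ⟨(n - (c z : ℕ)) % n, Nat.mod_lt _ hn⟩, ?_⟩
      simp only [hψ]
      rw [← hc]
      simp only [hψ]
      rw [← Finset.sum_neg_distrib]
      refine Finset.sum_congr rfl fun z _ => ?_
      rw [hmod]
      refine eq_neg_of_add_eq_zero_left ?_
      rw [← add_nsmul, Nat.sub_add_cancel (le_of_lt (c z).2), htor]
  have hsurj : Function.Surjective
      (fun c : (s → Fin n) =>
        (⟨ψ c, by
          exact sum_mem fun x _ =>
            AddSubgroup.nsmul_mem _ (AddSubgroup.subset_closure x.2) _⟩ :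
          AddSubgroup.closure (s : Set G))) := by
    rintro ⟨z, hz⟩
    obtain ⟨c, hc⟩ := hmem z hz
    exact ⟨c, Subtype.ext hc⟩
  have hfin : Finite (AddSubgroup.closure (s : Set G)) :=
    Finite.of_surjective _ hsurj
  refine ⟨?_, hfin⟩
  calc Nat.card (AddSubgroup.closure (s : Set G)) ≤ Nat.card (s → Fin n) :=
        Nat.card_le_card_of_surjective _ hsurj
    _ = n ^ s.card := by simp [Nat.card_eq_fintype_card, Fintype.card_fun]

set_option maxHeartbeats 1000000 in
/-- A group of finite Prüfer rank with bounded exponent is finite. -/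
lemma finite_of_rank_of_torsion {G : Type*} [AddCommGroup G] {R : ℕ}
    (h : HasRankLE G R) (n : ℕ) (hn : 0 < n) (htor : ∀ x : G, n • x = 0) :
    Finite G := by
  classical
  -- every f.g. subgroup is finite of card ≤ n ^ R
  have key : ∀ T : AddSubgroup G, T.FG → Finite T ∧ Nat.card T ≤ n ^ R := by
    intro T hT
    obtain ⟨s, hsc, hsT⟩ := h T hT
    obtain ⟨hcard, hfin⟩ := closure_card_le n hn htor s
    rw [hsT] at hcard hfin
    exact ⟨hfin, le_trans hcard (Nat.pow_le_pow_right hn hsc)⟩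
  set I : Set ℕ := {k | ∃ T : AddSubgroup G, T.FG ∧ Nat.card T = k} with hI
  have hne : I.Nonempty := ⟨Nat.card (⊥ : AddSubgroup G), ⊥, ⟨∅, by simp⟩, rfl⟩
  have hbdd : BddAbove I := ⟨n ^ R, by rintro k ⟨T, hT, rfl⟩; exact (key T hT).2⟩
  obtain ⟨T₀, hT₀fg, hT₀card⟩ := Nat.sSup_mem hne hbdd
  haveI hT₀fin : Finite T₀ := (key T₀ hT₀fg).1
  have htop : ∀ x : G, x ∈ T₀ := by
    intro x
    set T' := T₀ ⊔ AddSubgroup.closure {x} with hT'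
    have hT'fg : T'.FG := by
      obtain ⟨t, ht⟩ := hT₀fg
      refine ⟨insert x t, ?_⟩
      rw [Finset.coe_insert, Set.insert_eq, AddSubgroup.closure_union, ht, hT']
      exact sup_comm _ _
    have hle : Nat.card T' ≤ Nat.card T₀ := by
      rw [hT₀card]
      exact le_csSup hbdd ⟨T', hT'fg, rfl⟩
    haveI hT'fin : Finite T' := (key T' hT'fg).1
    have hincl : ∀ t : T₀, (t : G) ∈ T' := by
      intro t
      rw [hT']
      exact (le_sup_left : T₀ ≤ T₀ ⊔ AddSubgroup.closure {x}) t.2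
    set ι : T₀ → T' := fun t => ⟨(t : G), hincl t⟩ with hι
    have hinj : Function.Injective ι := by
      intro a b hab
      apply Subtype.ext
      have h1 := congrArg Subtype.val hab
      simpa [hι] using h1
    have hcard : Nat.card T₀ = Nat.card T' :=
      le_antisymm (Nat.card_le_card_of_injective ι hinj) hle
    have hbij : Function.Bijective ι :=
      (Nat.bijective_iff_injective_and_card ι).2 ⟨hinj, hcard⟩
    have hx' : x ∈ T' := by
      rw [hT']
      exact (le_sup_right : AddSubgroup.closure {x} ≤ T₀ ⊔ AddSubgroup.closure {x})
        (AddSubgroup.subset_closure rfl)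
    obtain ⟨t, htx⟩ := hbij.2 ⟨x, hx'⟩
    have htx' : (t : G) = x := congrArg Subtype.val htx
    exact htx' ▸ t.2
  exact Finite.of_surjective (fun t : T₀ => (t : G)) fun x => ⟨⟨x, htop x⟩, rfl⟩

end RankLemmas

open groupCohomology

/-- The finiteness of `H¹(H, A)` for a finite group `H` acting on an abelian group `A`
of finite Prüfer rank (used in Lemma 3.2 of the paper). -/
theorem stmt11 (H : Type) [Group H] [Finite H]
    (A : Type) [AddCommGroup A] [DistribMulAction H A]
    (r : ℕ)
    (hrank : ∀ S : AddSubgroup A, S.FG →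
      ∃ s : Finset A, s.card ≤ r ∧ AddSubgroup.closure (s : Set A) = S) :
    Finite (groupCohomology.H1 (Rep.ofDistribMulAction ℤ H A)) := by
  haveI : Fintype H := Fintype.ofFinite H
  set Arep := Rep.ofDistribMulAction ℤ H A with hArep
  set n := Fintype.card H with hn
  have hn0 : 0 < n := Fintype.card_pos
  -- rank of H → A
  have hA : HasRankLE A r := hrank
  have hfun : HasRankLE (H → A) (n * r) := hasRankLE_fun hA
  -- rank of oneCocycles
  have hZ : HasRankLE (cocycles₁ Arep) (n * r) :=
    hasRankLE_of_injective (cocycles₁ Arep).subtype.toAddMonoidHom Subtype.val_injective hfun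
  -- rank of H1
  have hH1 : HasRankLE (H1 Arep) (n * r) :=
    hasRankLE_of_surjective (H1π Arep).hom.toAddMonoidHom
      ((ModuleCat.epi_iff_surjective _).1 inferInstance) hZ
  -- torsion
  have htor : ∀ x : H1 Arep, n • x = 0 := by
    intro x
    induction x using H1_induction_on with | h z => ?_
    rw [← map_nsmul, H1π_eq_zero_iff]
    rw [coboundaries₁, LinearMap.mem_range]
    refine ⟨-∑ h : H, z h, funext fun g => ?_⟩
    have hcoc := (mem_cocycles₁_iff (A := Arep) (z : H → A)).1 z.2
    have hsum : ∑ h : H, z (g * h) = ∑ h : H, z h :=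
      Fintype.sum_bijective (fun h => g * h) (Group.mulLeft_bijective g) _ _
        (fun h => rfl)
    have : ∑ h : H, z (g * h) = Arep.ρ g (∑ h : H, z h) + n • z g := by
      rw [Finset.sum_congr rfl (fun h _ => hcoc g h), Finset.sum_add_distrib,
        map_sum]
      congr 1
      rw [Finset.sum_const, Finset.card_univ]
    have hsum2 : Arep.ρ g (∑ h : H, z h) + n • z g = ∑ h : H, z h :=
      this.symm.trans hsum
    have key : n • z g = (∑ h : H, z h) - Arep.ρ g (∑ h : H, z h) :=
      eq_sub_of_add_eq' hsum2
    rw [d₀₁_hom_apply]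
    show Arep.ρ g (-∑ h : H, z h) - (-∑ h : H, z h) = (n • z) g
    have hco : ((n • z : cocycles₁ Arep) : H → A) g = n • z g := rfl
    rw [map_neg, hco, key]
    abel
  exact finite_of_rank_of_torsion hH1 n hn0 htor
end

section
/- Let F be a finite group, let V be a vector space over ℚ, and let φ be an action of F on V by additive automorphisms. Form the semidirect product Γ = V ⋊_φ F. Then every finite subgroup L of Γ is conjugate, by an element of the canonical normal copy of V in Γ, to a subgroup of the canonical copy of F. -/
/-- Used in the proof of Proposition 3.5: if a finite group `F` acts on a `ℚ`-vector
space `V` by automorphisms of its additive group, then every finite subgroup of the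
semidirect product `V ⋊ F` is conjugate, by an element of the canonical normal copy of
`V`, to a subgroup of the canonical copy of `F`. -/
theorem stmt12 (F : Type) [Group F] [Finite F]
    (V : Type) [AddCommGroup V] [Module ℚ V]
    (φ : F →* MulAut (Multiplicative V))
    (L : Subgroup (Multiplicative V ⋊[φ] F)) (hL : Finite L) :
    ∃ g ∈ SemidirectProduct.inl.range,
      L.map (MulAut.conj g).toMonoidHom ≤ SemidirectProduct.inr.range := by
  classical
  haveI : Fintype L := Fintype.ofFinite L
  -- the additive version of the action
  let ψ : F → (V →+ V) := fun f =>
    { toFun := fun v => Multiplicative.toAdd (φ f (Multiplicative.ofAdd v))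
      map_zero' := by simp
      map_add' := by intro a b; simp [ofAdd_add] }
  set n := Fintype.card L with hn
  have hn0 : (n : ℚ) ≠ 0 := by
    exact_mod_cast Fintype.card_ne_zero
  set S : V := ∑ ℓ : L, Multiplicative.toAdd (ℓ : Multiplicative V ⋊[φ] F).left with hS
  set w : V := (n : ℚ)⁻¹ • S with hw
  have key : ∀ ℓ ∈ L, Multiplicative.toAdd
      (ℓ : Multiplicative V ⋊[φ] F).left = w - ψ ℓ.right w := by
    intro ℓ hℓ
    set a : L := ⟨ℓ, hℓ⟩ with ha
    have hsum : ∑ x : L, Multiplicative.toAdd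
        (((a * x : L) : Multiplicative V ⋊[φ] F)).left = S := by
      rw [hS]
      exact Fintype.sum_equiv (Equiv.mulLeft a) _ _ (fun x => rfl)
    have h2 : (n • Multiplicative.toAdd ℓ.left) + ψ ℓ.right S = S := by
      conv_rhs => rw [← hsum]
      have hns : (n • Multiplicative.toAdd ℓ.left)
          = ∑ _x : L, Multiplicative.toAdd ℓ.left := by
        rw [Finset.sum_const, Finset.card_univ]
      rw [hns, hS, map_sum, ← Finset.sum_add_distrib]
      apply Finset.sum_congr rfl
      intro x _
      show _ = Multiplicative.toAdd ((ℓ * (x : Multiplicative V ⋊[φ] F)).left)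
      simp [ψ]
    have hψS : ψ ℓ.right w = (n : ℚ)⁻¹ • ψ ℓ.right S := by
      rw [hw, map_rat_smul]
    rw [hψS, hw, ← smul_sub]
    have : S - ψ ℓ.right S = n • Multiplicative.toAdd ℓ.left :=
      (eq_sub_of_add_eq h2).symm
    rw [this, ← Nat.cast_smul_eq_nsmul ℚ, smul_smul, inv_mul_cancel₀ hn0, one_smul]
  refine ⟨SemidirectProduct.inl (Multiplicative.ofAdd (-w)), ⟨_, rfl⟩, ?_⟩
  rintro y ⟨x, hx, rfl⟩
  refine ⟨x.right, ?_⟩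
  have hx' := key x hx
  ext
  · show (1 : Multiplicative V) = _
    simp only [MulEquiv.coe_toMonoidHom, MulAut.conj_apply, SemidirectProduct.mul_left,
      SemidirectProduct.mul_right, SemidirectProduct.inv_left, SemidirectProduct.inv_right,
      SemidirectProduct.left_inl, SemidirectProduct.right_inl, map_one, MulAut.one_apply,
      one_mul, inv_one, mul_one]
    have : Multiplicative.toAdd (Multiplicative.ofAdd (-w) * x.left *
        φ x.right (Multiplicative.ofAdd (-w))⁻¹) = 0 := by
      have hψ : Multiplicative.toAdd (φ x.right (Multiplicative.ofAdd (-w))⁻¹) =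
          ψ x.right w := by
        simp [ψ]
      simp only [toAdd_mul, toAdd_ofAdd, hψ, hx']
      abel
    have := congrArg Multiplicative.ofAdd this
    rw [ofAdd_toAdd, ofAdd_zero] at this
    exact this.symm
  · show x.right = _
    simp
end
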